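/- Let k ≥ 3 be an integer, let G = (A ∪ B, E) be a bipartite graph in which every vertex has degree at most k+1, and let I_G and X_G be the associated personalized bi-valued instance and allocation. If an allocation X' Pareto-dominates X_G, then for every agent a ∈ A, either X'_a = (X_G)_a, or the following all hold: a gives away exactly k goods (|(X_G)_a \ X'_a| = k), a receives exactly k+1 goods (|X'_a \ (X_G)_a| = k+1), every good a receives is valued 1 by a, and u_a(X'_a) = u_a((X_G)_a). -/

import Mathlib

open Finset
open scoped Classical

noncomputable section

/-- Additive utility of a bundle: the sum of the values of the single goods in it. -/
def util {α β : Type*} [DecidableEq β] (u : α → β → ℝ) (i : α) (S : Finset β) : ℝ :=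
  ∑ g ∈ S, u i g

/-- `X` is an allocation: a partition of the set of goods into (possibly empty) bundles,
one per agent. -/
def IsAllocation {α β : Type*} [DecidableEq β] (X : α → Finset β) : Prop :=
  (∀ g : β, ∃ i, g ∈ X i) ∧ ∀ i j : α, i ≠ j → Disjoint (X i) (X j)

/-- `X'` Pareto-dominates `X` w.r.t. utilities `u`. -/
def ParetoDominates {α β : Type*} [DecidableEq β] (u : α → β → ℝ)
    (X' X : α → Finset β) : Prop :=
  (∀ i, util u i (X i) ≤ util u i (X' i)) ∧ ∃ j, util u j (X j) < util u j (X' j)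

variable {A B : Type*} [Fintype A] [Fintype B] [DecidableEq A] [DecidableEq B]

/-- The goods of the instance `I_G`: one good `g_e` for each edge `e ∈ E` of the bipartite
graph, plus `k+1` filler goods for each vertex `b ∈ B`. -/
abbrev RedGood (E : Finset (A × B)) (k : ℕ) : Type _ :=
  {e : A × B // e ∈ E} ⊕ (B × Fin (k + 1))

/-- The utilities of the instance `I_G`: agent `a ∈ A` values `g_e` at `1 + 1/k` if `a` is
an endpoint of `e` and at `1` otherwise, and values every filler good at `1`; agent `b ∈ B`
values `g_e` at `1 + (1+ε)/k` if `b` is an endpoint of `e` and at `1` otherwise, and values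
every filler good at `1`. -/
def redUtil (E : Finset (A × B)) (k : ℕ) (ε : ℝ) : (A ⊕ B) → RedGood E k → ℝ
  | Sum.inl a, Sum.inl e => if e.val.1 = a then 1 + 1 / (k : ℝ) else 1
  | Sum.inl _, Sum.inr _ => 1
  | Sum.inr b, Sum.inl e => if e.val.2 = b then 1 + (1 + ε) / (k : ℝ) else 1
  | Sum.inr _, Sum.inr _ => 1

/-- The allocation `X_G`: each agent `a ∈ A` gets the goods `g_e` for the edges `e`
incident to `a`, and each agent `b ∈ B` gets its own `k+1` filler goods. -/
def XG (E : Finset (A × B)) (k : ℕ) : (A ⊕ B) → Finset (RedGood E k)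
  | Sum.inl a =>
      Finset.univ.filter (fun g => ∃ e : {e : A × B // e ∈ E}, g = Sum.inl e ∧ e.val.1 = a)
  | Sum.inr b =>
      Finset.univ.filter (fun g => ∃ p : B × Fin (k + 1), g = Sum.inr p ∧ p.1 = b)

/-- `G = (A ∪ B, E)` contains a `k`-regular bipartite subgraph: a nonempty edge set
`E₁ ⊆ E` such that every vertex incident to an edge of `E₁` is incident to exactly `k`
edges of `E₁`. -/
def HasKRegularSubgraph (E : Finset (A × B)) (k : ℕ) : Prop :=
  ∃ E₁ : Finset (A × B), E₁ ⊆ E ∧ E₁.Nonempty ∧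
    (∀ a : A, (E₁.filter (fun e => e.1 = a)).Nonempty →
      (E₁.filter (fun e => e.1 = a)).card = k) ∧
    (∀ b : B, (E₁.filter (fun e => e.2 = b)).Nonempty →
      (E₁.filter (fun e => e.2 = b)).card = k)

set_option linter.unusedSectionVars false

lemma mem_XG_inl {E : Finset (A × B)} {k : ℕ} {a : A} {g : RedGood E k} :
    g ∈ XG E k (Sum.inl a) ↔ ∃ e : {e : A × B // e ∈ E}, g = Sum.inl e ∧ e.val.1 = a := by
  simp [XG]

lemma mem_XG_inr {E : Finset (A × B)} {k : ℕ} {b : B} {g : RedGood E k} :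
    g ∈ XG E k (Sum.inr b) ↔ ∃ p : B × Fin (k + 1), g = Sum.inr p ∧ p.1 = b := by
  simp [XG]

lemma redUtil_of_mem_XG_inl {E : Finset (A × B)} {k : ℕ} {ε : ℝ} {a : A} {g : RedGood E k}
    (h : g ∈ XG E k (Sum.inl a)) : redUtil E k ε (Sum.inl a) g = 1 + 1 / (k : ℝ) := by
  obtain ⟨e, rfl, he⟩ := mem_XG_inl.mp h
  simp [redUtil, he]

lemma redUtil_of_not_mem_XG_inl {E : Finset (A × B)} {k : ℕ} {ε : ℝ} {a : A} {g : RedGood E k}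
    (h : g ∉ XG E k (Sum.inl a)) : redUtil E k ε (Sum.inl a) g = 1 := by
  match g with
  | Sum.inr p => simp [redUtil]
  | Sum.inl e =>
      have : ¬ e.val.1 = a := fun hea => h (mem_XG_inl.mpr ⟨e, rfl, hea⟩)
      simp [redUtil, this]

lemma redUtil_inr_eq {E : Finset (A × B)} {k : ℕ} {ε : ℝ} {b : B} (g : RedGood E k) :
    redUtil E k ε (Sum.inr b) g =
      1 + (if ∃ e : {e : A × B // e ∈ E}, g = Sum.inl e ∧ e.val.2 = b
        then (1 + ε) / (k : ℝ) else 0) := by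
  match g with
  | Sum.inr p => simp [redUtil]
  | Sum.inl e =>
      by_cases he : e.val.2 = b
      · simp [redUtil, he]
      · have : ¬ ∃ e' : {e : A × B // e ∈ E}, (Sum.inl e : RedGood E k) = Sum.inl e' ∧ e'.val.2 = b := by
          rintro ⟨e', he', h2⟩
          exact he (by cases Sum.inl_injective he'; exact h2)
        simp [redUtil, he, this]

lemma XG_isAllocation (E : Finset (A × B)) (k : ℕ) : IsAllocation (XG E k) := by
  constructor
  · intro g
    match g with
    | Sum.inl e => exact ⟨Sum.inl e.val.1, mem_XG_inl.mpr ⟨e, rfl, rfl⟩⟩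
    | Sum.inr p => exact ⟨Sum.inr p.1, mem_XG_inr.mpr ⟨p, rfl, rfl⟩⟩
  · intro i j hij
    rw [Finset.disjoint_left]
    intro g hgi hgj
    apply hij
    match i, j, g with
    | Sum.inl a, Sum.inl a', Sum.inl e =>
        obtain ⟨e1, h1, h1'⟩ := mem_XG_inl.mp hgi
        obtain ⟨e2, h2, h2'⟩ := mem_XG_inl.mp hgj
        cases Sum.inl_injective (h1.symm.trans h2)
        exact congrArg Sum.inl (h1'.symm.trans h2')
    | Sum.inl a, Sum.inl a', Sum.inr p =>
        obtain ⟨e1, h1, _⟩ := mem_XG_inl.mp hgi; exact absurd h1 (by simp)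
    | Sum.inl a, Sum.inr b, g =>
        obtain ⟨e1, h1, _⟩ := mem_XG_inl.mp hgi
        obtain ⟨p2, h2, _⟩ := mem_XG_inr.mp hgj
        rw [h1] at h2; exact absurd h2 (by simp)
    | Sum.inr b, Sum.inl a, g =>
        obtain ⟨p1, h1, _⟩ := mem_XG_inr.mp hgi
        obtain ⟨e2, h2, _⟩ := mem_XG_inl.mp hgj
        rw [h1] at h2; exact absurd h2 (by simp)
    | Sum.inr b, Sum.inr b', Sum.inr p =>
        obtain ⟨p1, h1, h1'⟩ := mem_XG_inr.mp hgi
        obtain ⟨p2, h2, h2'⟩ := mem_XG_inr.mp hgj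
        cases Sum.inr_injective h1; cases Sum.inr_injective h2
        exact congrArg Sum.inr (h1'.symm.trans h2')
    | Sum.inr b, Sum.inr b', Sum.inl e =>
        obtain ⟨p1, h1, _⟩ := mem_XG_inr.mp hgi; exact absurd h1 (by simp)

lemma alloc_card_sum {E : Finset (A × B)} {k : ℕ} {X : (A ⊕ B) → Finset (RedGood E k)}
    (hX : IsAllocation X) :
    ∑ i : A ⊕ B, (X i).card = Fintype.card (RedGood E k) := by
  classical
  have hcover : (univ : Finset (A ⊕ B)).biUnion X = univ := by
    ext g
    simp only [Finset.mem_biUnion, Finset.mem_univ, true_and, iff_true]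
    exact hX.1 g
  calc ∑ i : A ⊕ B, (X i).card
      = ((univ : Finset (A ⊕ B)).biUnion X).card := by
        rw [Finset.card_biUnion (fun i _ j _ hij => hX.2 i j hij)]
    _ = Fintype.card (RedGood E k) := by rw [hcover, Finset.card_univ]

lemma card_XG_inr (E : Finset (A × B)) (k : ℕ) (b : B) :
    (XG E k (Sum.inr b)).card = k + 1 := by
  have : XG E k (Sum.inr b) =
      (univ : Finset (Fin (k+1))).image (fun i => (Sum.inr (b, i) : RedGood E k)) := by
    ext g
    simp only [mem_XG_inr, Finset.mem_image, Finset.mem_univ, true_and]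
    constructor
    · rintro ⟨⟨b', i⟩, rfl, rfl⟩; exact ⟨i, rfl⟩
    · rintro ⟨i, rfl⟩; exact ⟨(b, i), rfl, rfl⟩
  rw [this, Finset.card_image_of_injective _ (fun i j h => by
    have := Sum.inr_injective h; simpa using this)]
  simp

lemma card_XG_inl_le (E : Finset (A × B)) (k : ℕ)
    (hdegA : ∀ a : A, (E.filter (fun e => e.1 = a)).card ≤ k + 1) (a : A) :
    (XG E k (Sum.inl a)).card ≤ k + 1 := by
  have h1 : XG E k (Sum.inl a) =
      ((univ : Finset {e : A × B // e ∈ E}).filter (fun e => e.val.1 = a)).image Sum.inl := by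
    ext g
    simp only [mem_XG_inl, Finset.mem_image, Finset.mem_filter, Finset.mem_univ, true_and]
    constructor
    · rintro ⟨e, rfl, he⟩; exact ⟨e, he, rfl⟩
    · rintro ⟨e, he, rfl⟩; exact ⟨e, rfl, he⟩
  have h2 : ((univ : Finset {e : A × B // e ∈ E}).filter (fun e => e.val.1 = a)).card
      = (E.filter (fun e => e.1 = a)).card := by
    apply Finset.card_nbij (i := Subtype.val)
    · intro e he
      simp only [Finset.mem_coe, Finset.mem_filter, Finset.mem_univ, true_and] at he
      exact Finset.mem_filter.mpr ⟨e.2, he⟩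
    · exact Subtype.val_injective.injOn
    · intro x hx
      simp only [Finset.coe_filter, Set.mem_setOf_eq] at hx ⊢
      exact ⟨⟨x, hx.1⟩, by simp [hx.2], rfl⟩
  rw [h1, Finset.card_image_of_injective _ Sum.inl_injective, h2]
  exact hdegA a

lemma util_bundle_inl (E : Finset (A × B)) (k : ℕ) (ε : ℝ) (a : A) (P : Finset (RedGood E k)) :
    util (redUtil E k ε) (Sum.inl a) P
      = ((P \ XG E k (Sum.inl a)).card : ℝ)
        + ((P ∩ XG E k (Sum.inl a)).card : ℝ) * (1 + 1/(k:ℝ)) := by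
  have hsplit : ∑ g ∈ P \ (P ∩ XG E k (Sum.inl a)), redUtil E k ε (Sum.inl a) g
      + ∑ g ∈ P ∩ XG E k (Sum.inl a), redUtil E k ε (Sum.inl a) g
      = ∑ g ∈ P, redUtil E k ε (Sum.inl a) g := Finset.sum_sdiff Finset.inter_subset_left
  rw [Finset.sdiff_inter_self_left] at hsplit
  rw [util, ← hsplit]
  congr 1
  · rw [Finset.sum_congr rfl (fun g hg => redUtil_of_not_mem_XG_inl (Finset.mem_sdiff.mp hg).2)]
    simp
  · rw [Finset.sum_congr rfl (fun g hg => redUtil_of_mem_XG_inl (Finset.mem_inter.mp hg).2),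
      Finset.sum_const, nsmul_eq_mul]

lemma util_bundle_inr (E : Finset (A × B)) (k : ℕ) (ε : ℝ) (b : B) (P : Finset (RedGood E k)) :
    util (redUtil E k ε) (Sum.inr b) P
      = (P.card : ℝ)
        + ((P.filter (fun g => ∃ e : {e : A × B // e ∈ E}, g = Sum.inl e ∧ e.val.2 = b)).card : ℝ)
          * ((1+ε)/(k:ℝ)) := by
  rw [util, Finset.sum_congr rfl (fun g _ => redUtil_inr_eq g), Finset.sum_add_distrib]
  congr 1
  · simp
  · rw [← Finset.sum_filter, Finset.sum_const, nsmul_eq_mul]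

lemma util_XG_inr (E : Finset (A × B)) (k : ℕ) (ε : ℝ) (b : B) :
    util (redUtil E k ε) (Sum.inr b) (XG E k (Sum.inr b)) = (k:ℝ) + 1 := by
  rw [util_bundle_inr]
  have hemp : (XG E k (Sum.inr b)).filter
      (fun g => ∃ e : {e : A × B // e ∈ E}, g = Sum.inl e ∧ e.val.2 = b) = ∅ := by
    rw [Finset.filter_eq_empty_iff]
    intro g hg
    obtain ⟨p, rfl, _⟩ := mem_XG_inr.mp hg
    rintro ⟨e, he, _⟩
    exact absurd he (by simp)
  rw [hemp, card_XG_inr]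
  simp

lemma sum_card_fiber {γ C : Type*} [Fintype γ] [Fintype C] [DecidableEq C]
    (π : γ → C) (Q : γ → Prop) [DecidablePred Q] :
    ∑ c : C, ((univ : Finset γ).filter (fun x => π x = c ∧ Q x)).card
      = ((univ : Finset γ).filter Q).card := by
  simp_rw [Finset.card_filter]
  rw [Finset.sum_comm]
  apply Finset.sum_congr rfl
  intro x _
  by_cases hQ : Q x
  · simp [hQ]
  · simp [hQ]

lemma nb_eq (E : Finset (A × B)) (k : ℕ) (X' : (A ⊕ B) → Finset (RedGood E k)) (b : B) :
    ((X' (Sum.inr b)).filter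
        (fun g => ∃ e : {e : A × B // e ∈ E}, g = Sum.inl e ∧ e.val.2 = b)).card
      = ((univ : Finset {e : A × B // e ∈ E}).filter
          (fun e => e.val.2 = b ∧ (Sum.inl e : RedGood E k) ∈ X' (Sum.inr e.val.2))).card := by
  have himg : (X' (Sum.inr b)).filter
        (fun g => ∃ e : {e : A × B // e ∈ E}, g = Sum.inl e ∧ e.val.2 = b)
      = ((univ : Finset {e : A × B // e ∈ E}).filter
          (fun e => e.val.2 = b ∧ (Sum.inl e : RedGood E k) ∈ X' (Sum.inr e.val.2))).image
          Sum.inl := by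
    ext g
    simp only [Finset.mem_filter, Finset.mem_image, Finset.mem_univ, true_and]
    constructor
    · rintro ⟨hg, e, rfl, he⟩
      exact ⟨e, ⟨he, by rw [he]; exact hg⟩, rfl⟩
    · rintro ⟨e, ⟨he, hmem⟩, rfl⟩
      rw [he] at hmem
      exact ⟨hmem, e, rfl, he⟩
  rw [himg, Finset.card_image_of_injective _ Sum.inl_injective]

lemma sdiff_card_eq (E : Finset (A × B)) (k : ℕ) (X' : (A ⊕ B) → Finset (RedGood E k)) (a : A) :
    (XG E k (Sum.inl a) \ X' (Sum.inl a)).card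
      = ((univ : Finset {e : A × B // e ∈ E}).filter
          (fun e => e.val.1 = a ∧ (Sum.inl e : RedGood E k) ∉ X' (Sum.inl e.val.1))).card := by
  have himg : XG E k (Sum.inl a) \ X' (Sum.inl a)
      = ((univ : Finset {e : A × B // e ∈ E}).filter
          (fun e => e.val.1 = a ∧ (Sum.inl e : RedGood E k) ∉ X' (Sum.inl e.val.1))).image
          Sum.inl := by
    ext g
    simp only [Finset.mem_sdiff, Finset.mem_image, Finset.mem_filter, Finset.mem_univ, true_and]
    constructor
    · rintro ⟨hg, hng⟩
      obtain ⟨e, rfl, he⟩ := mem_XG_inl.mp hg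
      exact ⟨e, ⟨he, by rw [he]; exact hng⟩, rfl⟩
    · rintro ⟨e, ⟨he, hnm⟩, rfl⟩
      rw [he] at hnm
      exact ⟨mem_XG_inl.mpr ⟨e, rfl, he⟩, hnm⟩
  rw [himg, Finset.card_image_of_injective _ Sum.inl_injective]

set_option maxHeartbeats 1000000 in
/-- If an allocation `X'` Pareto-dominates `X_G`, then every agent `a ∈ A`
either keeps exactly her original bundle, or gives away exactly `k` goods, receives exactly
`k+1` goods all of which she values at `1`, and her utility is unchanged. -/
theorem paretoImprovement_structure_on_A
    (k : ℕ) (hk : 3 ≤ k) (E : Finset (A × B)) (ε : ℝ)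
    (hdegA : ∀ a : A, (E.filter (fun e => e.1 = a)).card ≤ k + 1)
    (hdegB : ∀ b : B, (E.filter (fun e => e.2 = b)).card ≤ k + 1)
    (hε0 : 0 < ε)
    (hε1 : ε < 1 / (k * (E.card + (k + 1) * Fintype.card B)))
    (X' : (A ⊕ B) → Finset (RedGood E k)) (hX' : IsAllocation X')
    (hdom : ParetoDominates (redUtil E k ε) X' (XG E k)) :
    ∀ a : A,
      X' (Sum.inl a) = XG E k (Sum.inl a) ∨
      ((XG E k (Sum.inl a) \ X' (Sum.inl a)).card = k ∧
        (X' (Sum.inl a) \ XG E k (Sum.inl a)).card = k + 1 ∧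
        (∀ g ∈ X' (Sum.inl a) \ XG E k (Sum.inl a), redUtil E k ε (Sum.inl a) g = 1) ∧
        util (redUtil E k ε) (Sum.inl a) (X' (Sum.inl a)) =
          util (redUtil E k ε) (Sum.inl a) (XG E k (Sum.inl a))) := by
  classical
  have hk3 : (3:ℝ) ≤ (k:ℝ) := by exact_mod_cast hk
  have hk0 : (0:ℝ) < (k:ℝ) := by linarith
  have hk0' : (k:ℝ) ≠ 0 := ne_of_gt hk0
  set d : (A ⊕ B) → ℝ := fun i =>
    util (redUtil E k ε) i (X' i) - util (redUtil E k ε) i (XG E k i) with hd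
  have hd0 : ∀ i, 0 ≤ d i := fun i => sub_nonneg.mpr (hdom.1 i)
  -- decomposition on side A
  have hda : ∀ a : A, d (Sum.inl a)
      = ((X' (Sum.inl a) \ XG E k (Sum.inl a)).card : ℝ)
        - ((XG E k (Sum.inl a) \ X' (Sum.inl a)).card : ℝ) * (1 + 1/(k:ℝ)) := by
    intro a
    have hdef : d (Sum.inl a) = util (redUtil E k ε) (Sum.inl a) (X' (Sum.inl a))
        - util (redUtil E k ε) (Sum.inl a) (XG E k (Sum.inl a)) := rfl
    have h1 := util_bundle_inl E k ε a (X' (Sum.inl a))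
    have h2 := util_bundle_inl E k ε a (XG E k (Sum.inl a))
    rw [Finset.sdiff_self, Finset.inter_self] at h2
    have h5 : ((XG E k (Sum.inl a)).card : ℝ)
        = ((XG E k (Sum.inl a) ∩ X' (Sum.inl a)).card : ℝ)
          + ((XG E k (Sum.inl a) \ X' (Sum.inl a)).card : ℝ) := by
      exact_mod_cast (Finset.card_inter_add_card_sdiff _ _).symm
    have h6 : X' (Sum.inl a) ∩ XG E k (Sum.inl a) = XG E k (Sum.inl a) ∩ X' (Sum.inl a) :=
      Finset.inter_comm _ _
    rw [h6] at h1
    rw [hdef, h1, h2, h5]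
    simp only [Finset.card_empty, Nat.cast_zero]
    ring
  have hda' : ∀ a : A, d (Sum.inl a)
      = (((X' (Sum.inl a)).card : ℝ) - ((XG E k (Sum.inl a)).card : ℝ))
        - ((XG E k (Sum.inl a) \ X' (Sum.inl a)).card : ℝ) / (k:ℝ) := by
    intro a
    rw [hda a]
    have h5 : ((XG E k (Sum.inl a)).card : ℝ)
        = ((XG E k (Sum.inl a) ∩ X' (Sum.inl a)).card : ℝ)
          + ((XG E k (Sum.inl a) \ X' (Sum.inl a)).card : ℝ) := by
      exact_mod_cast (Finset.card_inter_add_card_sdiff _ _).symm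
    have h7 : ((X' (Sum.inl a)).card : ℝ)
        = ((X' (Sum.inl a) ∩ XG E k (Sum.inl a)).card : ℝ)
          + ((X' (Sum.inl a) \ XG E k (Sum.inl a)).card : ℝ) := by
      exact_mod_cast (Finset.card_inter_add_card_sdiff _ _).symm
    have h6 : ((X' (Sum.inl a) ∩ XG E k (Sum.inl a)).card : ℝ)
        = ((XG E k (Sum.inl a) ∩ X' (Sum.inl a)).card : ℝ) := by
      rw [Finset.inter_comm]
    rw [h5, h7, h6]
    field_simp
    ring
  -- decomposition on side B
  have hdb : ∀ b : B, d (Sum.inr b)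
      = (((X' (Sum.inr b)).card : ℝ) - ((XG E k (Sum.inr b)).card : ℝ))
        + (((univ : Finset {e : A × B // e ∈ E}).filter
            (fun e => e.val.2 = b ∧ (Sum.inl e : RedGood E k) ∈ X' (Sum.inr e.val.2))).card : ℝ)
          * ((1+ε)/(k:ℝ)) := by
    intro b
    have hdef : d (Sum.inr b) = util (redUtil E k ε) (Sum.inr b) (X' (Sum.inr b))
        - util (redUtil E k ε) (Sum.inr b) (XG E k (Sum.inr b)) := rfl
    have h1 := util_bundle_inr E k ε b (X' (Sum.inr b))
    rw [nb_eq E k X' b] at h1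
    have h2 := util_XG_inr E k ε b
    have h3 : ((XG E k (Sum.inr b)).card : ℝ) = (k:ℝ) + 1 := by
      rw [card_XG_inr]; push_cast; ring
    rw [hdef, h1, h2, h3]
    ring
  -- global counts
  set N : ℕ := ∑ b : B, ((univ : Finset {e : A × B // e ∈ E}).filter
      (fun e => e.val.2 = b ∧ (Sum.inl e : RedGood E k) ∈ X' (Sum.inr e.val.2))).card with hN
  set S : ℕ := ∑ a : A, ((XG E k (Sum.inl a) \ X' (Sum.inl a)).card) with hS
  have hNval : N = ((univ : Finset {e : A × B // e ∈ E}).filter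
      (fun e => (Sum.inl e : RedGood E k) ∈ X' (Sum.inr e.val.2))).card := by
    rw [hN]
    exact sum_card_fiber (γ := {e : A × B // e ∈ E}) (C := B) (fun e => e.val.2) _
  have hNS : N ≤ S := by
    have hSval : S = ((univ : Finset {e : A × B // e ∈ E}).filter
        (fun e => (Sum.inl e : RedGood E k) ∉ X' (Sum.inl e.val.1))).card := by
      rw [hS, Finset.sum_congr rfl (fun a _ => sdiff_card_eq E k X' a)]
      exact sum_card_fiber (γ := {e : A × B // e ∈ E}) (C := A) (fun e => e.val.1) _
    rw [hNval, hSval]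
    apply Finset.card_le_card
    intro e he
    simp only [Finset.mem_filter, Finset.mem_univ, true_and] at he ⊢
    intro hmem
    have hne : (Sum.inl e.val.1 : A ⊕ B) ≠ Sum.inr e.val.2 := by simp
    exact (Finset.disjoint_left.mp (hX'.2 _ _ hne)) hmem he
  have hNE : N ≤ E.card := by
    rw [hNval]
    calc ((univ : Finset {e : A × B // e ∈ E}).filter _).card
        ≤ (univ : Finset {e : A × B // e ∈ E}).card := Finset.card_filter_le _ _
      _ = E.card := by rw [Finset.card_univ, Fintype.card_coe]
  -- cardinality conservation
  have hcons : ∑ i : A ⊕ B, ((X' i).card : ℝ) = ∑ i : A ⊕ B, ((XG E k i).card : ℝ) := by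
    have h1 := alloc_card_sum hX'
    have h2 := alloc_card_sum (XG_isAllocation E k)
    have h3 : ∑ i : A ⊕ B, (X' i).card = ∑ i : A ⊕ B, (XG E k i).card := h1.trans h2.symm
    exact_mod_cast h3
  -- total surplus
  have htotal : ∑ i : A ⊕ B, d i = ((N:ℝ) * (1 + ε) - (S:ℝ)) / (k:ℝ) := by
    have hsplit : ∑ i : A ⊕ B, d i = ∑ a : A, d (Sum.inl a) + ∑ b : B, d (Sum.inr b) :=
      Fintype.sum_sum_type d
    have hcons' : (∑ a : A, (((X' (Sum.inl a)).card : ℝ) - ((XG E k (Sum.inl a)).card : ℝ)))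
        + (∑ b : B, (((X' (Sum.inr b)).card : ℝ) - ((XG E k (Sum.inr b)).card : ℝ))) = 0 := by
      have h4 := hcons
      rw [Fintype.sum_sum_type (fun i => ((X' i).card : ℝ)),
        Fintype.sum_sum_type (fun i => ((XG E k i).card : ℝ))] at h4
      rw [Finset.sum_sub_distrib, Finset.sum_sub_distrib]
      linarith
    have hA : ∑ a : A, d (Sum.inl a)
        = (∑ a : A, (((X' (Sum.inl a)).card : ℝ) - ((XG E k (Sum.inl a)).card : ℝ)))
          - (S:ℝ)/(k:ℝ) := by
      rw [Finset.sum_congr rfl (fun a _ => hda' a), Finset.sum_sub_distrib, ← Finset.sum_div]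
      congr 2
      rw [hS]
      push_cast
      rfl
    have hB : ∑ b : B, d (Sum.inr b)
        = (∑ b : B, (((X' (Sum.inr b)).card : ℝ) - ((XG E k (Sum.inr b)).card : ℝ)))
          + (N:ℝ) * ((1+ε)/(k:ℝ)) := by
      rw [Finset.sum_congr rfl (fun b _ => hdb b), Finset.sum_add_distrib, ← Finset.sum_mul]
      congr 2
      rw [hN]
      push_cast
      rfl
    have hcons2 := hcons'
    rw [Finset.sum_sub_distrib, Finset.sum_sub_distrib] at hcons2
    rw [hsplit, hA, hB]
    have hcons3 := mul_eq_zero_of_left hcons2 (k:ℝ)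
    field_simp
    linarith [hcons3, mul_eq_zero_of_left hcons' (k:ℝ)]
  -- each A-agent's surplus is < 1/k
  have hεN : (N:ℝ) * ε < 1 := by
    rcases Nat.eq_zero_or_pos N with h0 | h1
    · rw [h0]
      norm_num
    · have hN1 : (1:ℝ) ≤ (N:ℝ) := by exact_mod_cast h1
      have hEc1 : (1:ℝ) ≤ (E.card:ℝ) := by exact_mod_cast le_trans h1 hNE
      have hNM : (N:ℝ) ≤ (E.card:ℝ) + ((k:ℝ)+1) * (Fintype.card B:ℝ) := by
        have h2 : (N:ℝ) ≤ (E.card:ℝ) := by exact_mod_cast hNE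
        have h3 : (0:ℝ) ≤ ((k:ℝ)+1) * (Fintype.card B:ℝ) := by positivity
        linarith
      have hD0 : (0:ℝ) ≤ (E.card:ℝ) + ((k:ℝ)+1) * (Fintype.card B:ℝ) := by
        have h3 : (0:ℝ) ≤ ((k:ℝ)+1) * (Fintype.card B:ℝ) := by positivity
        linarith
      have hM0 : (0:ℝ) < (k:ℝ) * ((E.card:ℝ) + ((k:ℝ)+1) * (Fintype.card B:ℝ)) := by
        have h3 : (0:ℝ) ≤ ((k:ℝ)+1) * (Fintype.card B:ℝ) := by positivity
        nlinarith
      have key : ε * ((k:ℝ) * ((E.card:ℝ) + ((k:ℝ)+1) * (Fintype.card B:ℝ))) < 1 := by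
        push_cast at hε1
        exact (lt_div_iff₀ hM0).mp hε1
      have p1 : (N:ℝ)*ε ≤ ((E.card:ℝ) + ((k:ℝ)+1) * (Fintype.card B:ℝ))*ε :=
        mul_le_mul_of_nonneg_right hNM hε0.le
      have p3 : 3 * (((E.card:ℝ) + ((k:ℝ)+1) * (Fintype.card B:ℝ))*ε)
          ≤ (k:ℝ) * (((E.card:ℝ) + ((k:ℝ)+1) * (Fintype.card B:ℝ))*ε) :=
        mul_le_mul_of_nonneg_right hk3 (mul_nonneg hD0 hε0.le)
      nlinarith [key, p1, p3]
  have hdlt : ∀ a : A, d (Sum.inl a) < 1/(k:ℝ) := by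
    intro a
    have h1 : d (Sum.inl a) ≤ ∑ i : A ⊕ B, d i :=
      Finset.single_le_sum (fun i _ => hd0 i) (Finset.mem_univ _)
    have hSN : (N:ℝ) ≤ (S:ℝ) := by exact_mod_cast hNS
    have h2 : ((N:ℝ) * (1+ε) - (S:ℝ))/(k:ℝ) < 1/(k:ℝ) := by
      apply (div_lt_div_iff_of_pos_right hk0).mpr
      nlinarith
    calc d (Sum.inl a) ≤ ∑ i : A ⊕ B, d i := h1
      _ = ((N:ℝ) * (1+ε) - (S:ℝ))/(k:ℝ) := htotal
      _ < 1/(k:ℝ) := h2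
  -- conclude for each a
  intro a
  have h1 : 0 ≤ d (Sum.inl a) := hd0 _
  have h2 : d (Sum.inl a) < 1/(k:ℝ) := hdlt a
  rw [hda a] at h1 h2
  set s : ℕ := (XG E k (Sum.inl a) \ X' (Sum.inl a)).card with hsdef
  set t : ℕ := (X' (Sum.inl a) \ XG E k (Sum.inl a)).card with htdef
  have e1 : ((t:ℝ) - (s:ℝ)*(1 + 1/(k:ℝ))) * (k:ℝ) = (t:ℝ)*(k:ℝ) - ((s:ℝ)*(k:ℝ) + (s:ℝ)) := by
    field_simp
  have hA : (s:ℝ)*(k:ℝ) + (s:ℝ) ≤ (t:ℝ)*(k:ℝ) := by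
    have hm := mul_nonneg h1 hk0.le
    linarith [hm, e1]
  have e2 : (1/(k:ℝ))*(k:ℝ) = 1 := by field_simp
  have hB : (t:ℝ)*(k:ℝ) < (s:ℝ)*(k:ℝ) + (s:ℝ) + 1 := by
    have hm := mul_lt_mul_of_pos_right h2 hk0
    linarith [hm, e1, e2]
  have hnat : t * k = s * (k+1) := by
    have hle1 : s * (k+1) ≤ t * k := by
      have hr : (s:ℝ) * ((k:ℝ)+1) ≤ (t:ℝ)*(k:ℝ) := by linarith [hA]
      exact_mod_cast hr
    have hlt : t * k < s * (k+1) + 1 := by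
      have hr : (t:ℝ)*(k:ℝ) < (s:ℝ)*((k:ℝ)+1) + 1 := by linarith [hB]
      exact_mod_cast hr
    omega
  have hsle : s ≤ k + 1 := by
    rw [hsdef]
    exact le_trans (Finset.card_le_card Finset.sdiff_subset) (card_XG_inl_le E k hdegA a)
  have hcop : Nat.Coprime k (k+1) := Nat.coprime_self_add_right.mpr (Nat.coprime_one_right k)
  have hdvd : k ∣ s := hcop.dvd_of_dvd_mul_right (hnat ▸ (dvd_mul_left k t))
  obtain ⟨c, hc⟩ := hdvd
  have hcle : c ≤ 1 := by
    by_contra hcon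
    push_neg at hcon
    have h2c : k * 2 ≤ k * c := Nat.mul_le_mul_left k (by omega)
    have h2c' : k * 2 ≤ s := by rw [hc]; exact h2c
    omega
  interval_cases c
  · -- c = 0 : unchanged bundle
    have hs0 : s = 0 := by omega
    have ht0 : t = 0 := by
      have h0 : t * k = 0 := by rw [hnat, hs0]; ring
      rcases Nat.mul_eq_zero.mp h0 with h | h
      · exact h
      · omega
    left
    have hSe : XG E k (Sum.inl a) \ X' (Sum.inl a) = ∅ :=
      Finset.card_eq_zero.mp (hsdef.symm.trans hs0)
    have hTe : X' (Sum.inl a) \ XG E k (Sum.inl a) = ∅ :=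
      Finset.card_eq_zero.mp (htdef.symm.trans ht0)
    exact Finset.Subset.antisymm (Finset.sdiff_eq_empty_iff_subset.mp hTe)
      (Finset.sdiff_eq_empty_iff_subset.mp hSe)
  · -- c = 1 : the structured case
    have hsk2 : s = k := by omega
    have htk : t = k + 1 := by
      have : t * k = (k+1) * k := by rw [hnat, hsk2]; ring
      exact Nat.eq_of_mul_eq_mul_right (by omega) this
    right
    refine ⟨hsk2, htk, fun g hg => redUtil_of_not_mem_XG_inl (Finset.mem_sdiff.mp hg).2, ?_⟩
    have h0 : d (Sum.inl a) = 0 := by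
      rw [hda a, ← hsdef, ← htdef, hsk2, htk]
      push_cast
      field_simp
      ring
    have h0' : util (redUtil E k ε) (Sum.inl a) (X' (Sum.inl a))
        - util (redUtil E k ε) (Sum.inl a) (XG E k (Sum.inl a)) = 0 := h0
    exact sub_eq_zero.mp h0'

end
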